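/- Let X be an arcwise connected compact infinite metric space and T : X → X an invertible map such that the family {T^n : n ∈ ℤ} is equicontinuous. Then there exists ε₀ > 0 such that for every d > 0 there is a two-sided d-pseudotrajectory {x_k}_{k∈ℤ} such that no two-sided subsequence x_{k_n} with k_n → ±∞ can be ε₀-shadowed by the corresponding subsequence T^{k_n}(y) of any exact trajectory. -/
import Mathlib


open Metric Filter Set Topology
open scoped Classical

variable {X : Type*}

/-- A set of naturals is syndetic: bounded gaps. -/
def Syndetic (S : Set ℕ) : Prop := ∃ n : ℕ, ∀ m : ℕ, ∃ k ∈ S, m ≤ k ∧ k ≤ m + n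

/-- Forward orbit of a point. -/
def fwdOrbit (T : X → X) (y : X) : Set X := Set.range fun k : ℕ => T^[k] y

/-- A point is minimal (almost periodic): its forward orbit closure is a minimal set. -/
def IsMinimalPt [TopologicalSpace X] (T : X → X) (y : X) : Prop :=
  ∀ z ∈ closure (fwdOrbit T y), closure (fwdOrbit T z) = closure (fwdOrbit T y)

/-- ℤ-iteration of a homeomorphism. -/
noncomputable def zIter [TopologicalSpace X] (T : X ≃ₜ X) (n : ℤ) : X → X :=
  if 0 ≤ n then (⇑T)^[n.toNat] else (⇑T.symm)^[(-n).toNat]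

/-- `A` is an `ε`-network: every point of the space is within `ε` of `A`. -/
def IsNet [PseudoMetricSpace X] (ε : ℝ) (A : Set X) : Prop :=
  ∀ x : X, ∃ a ∈ A, dist x a ≤ ε

/-- A point is nonwandering (w.r.t. forward iterates). -/
def NonWandering [TopologicalSpace X] (T : X → X) (x : X) : Prop :=
  ∀ U : Set X, IsOpen U → x ∈ U → ∃ k : ℕ, 1 ≤ k ∧ ((fun p => T^[k] p) '' U ∩ U).Nonempty

/-- One-sided `d`-pseudotrajectory. -/
def IsPseudoTraj [PseudoMetricSpace X] (T : X → X) (d : ℝ) (x : ℕ → X) : Prop :=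
  ∀ k : ℕ, dist (x (k + 1)) (T (x k)) ≤ d

/-- Two-sided `d`-pseudotrajectory. -/
def IsPseudoTrajZ [PseudoMetricSpace X] (T : X → X) (d : ℝ) (x : ℤ → X) : Prop :=
  ∀ k : ℤ, dist (x (k + 1)) (T (x k)) ≤ d

/-- A chain recurrent point. -/
def ChainRec [PseudoMetricSpace X] (T : X → X) (x : X) : Prop :=
  ∀ d > (0 : ℝ), ∃ n : ℕ, 1 ≤ n ∧ ∃ c : ℕ → X, c 0 = x ∧ c n = x ∧
    ∀ k < n, dist (c (k + 1)) (T (c k)) ≤ d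

/-- ω-limit set of a point under a map. -/
def omegaSet [TopologicalSpace X] (T : X → X) (y : X) : Set X :=
  {p | ∃ φ : ℕ → ℕ, StrictMono φ ∧ Tendsto (fun n => T^[φ n] y) atTop (nhds p)}

/-- The set of recurrent points (`x ∈ ω(x)`). -/
def RecurrentPts [TopologicalSpace X] (T : X → X) : Set X := {x | x ∈ omegaSet T x}

/-- The multishadowing property (for homeomorphisms, two-sided). -/
def Multishadowing [PseudoMetricSpace X] (T : X ≃ₜ X) : Prop :=
  ∀ ε > (0 : ℝ), ∃ d > (0 : ℝ), ∀ x : ℤ → X, IsPseudoTrajZ (⇑T) d x →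
    ∃ Y : Finset X, ∀ k : ℤ, ∃ y ∈ Y, dist (x k) (zIter T k y) < ε

/-- Topological support of a measure: points all of whose open neighborhoods
have positive measure. -/
def msupp [TopologicalSpace X] [MeasurableSpace X] (μ : MeasureTheory.Measure X) : Set X :=
  {x | ∀ U : Set X, IsOpen U → x ∈ U → 0 < μ U}

/-- Counting function for density computations. -/
noncomputable def cnt (K : Set ℕ) (N : ℕ) : ℝ :=
  ((Finset.range (N + 1)).filter (· ∈ K)).card



lemma zIter_succ_aux [TopologicalSpace X] (T : X ≃ₜ X) (n : ℤ) (x : X) :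
    zIter T (n + 1) x = T (zIter T n x) := by
  rcases le_or_gt 0 n with h | h
  · have h1 : (0 : ℤ) ≤ n + 1 := by omega
    simp only [zIter, if_pos h, if_pos h1]
    have : (n + 1).toNat = n.toNat + 1 := by omega
    rw [this, Function.iterate_succ_apply']
  · rcases eq_or_lt_of_le (by omega : n + 1 ≤ 0) with h0 | h0
    · have hn : n = -1 := by omega
      subst hn
      have h1 : zIter T (-1 + 1) x = x := by norm_num [zIter]
      have h2 : zIter T (-1) x = T.symm x := by norm_num [zIter]
      rw [h1, h2, T.apply_symm_apply]
    · have h1 : ¬ (0 : ℤ) ≤ n + 1 := by omega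
      have h2 : ¬ (0 : ℤ) ≤ n := by omega
      simp only [zIter, if_neg h1, if_neg h2]
      have : (-n).toNat = (-(n + 1)).toNat + 1 := by omega
      rw [this, Function.iterate_succ_apply']
      exact (T.apply_symm_apply _).symm

lemma zIter_neg_cancel_aux [TopologicalSpace X] (T : X ≃ₜ X) (n : ℤ) (x : X) :
    zIter T (-n) (zIter T n x) = x := by
  rcases lt_trichotomy n 0 with h | h | h
  · have h1 : ¬ (0 : ℤ) ≤ n := by omega
    have h2 : (0 : ℤ) ≤ -n := by omega
    simp only [zIter, if_pos h2, if_neg h1]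
    exact Function.LeftInverse.iterate T.apply_symm_apply (-n).toNat x
  · subst h; simp [zIter]
  · have h1 : (0 : ℤ) ≤ n := by omega
    have h2 : ¬ (0 : ℤ) ≤ -n := by omega
    simp only [zIter, if_pos h1, if_neg h2, neg_neg]
    exact Function.LeftInverse.iterate T.symm_apply_apply n.toNat x

theorem stmt3 [MetricSpace X] [CompactSpace X] [Infinite X] [PathConnectedSpace X]
    (T : X ≃ₜ X) (heq : Equicontinuous fun n : ℤ => zIter T n) :
    ∃ ε₀ > (0 : ℝ), ∀ d > (0 : ℝ), ∃ x : ℤ → X, IsPseudoTrajZ (⇑T) d x ∧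
      ∀ (y : X) (k : ℤ → ℤ), StrictMono k → Tendsto k atTop atTop → Tendsto k atBot atBot →
        ¬ (∀ n : ℤ, dist (x (k n)) (zIter T (k n) y) < ε₀) := by
  obtain ⟨a, b, hab⟩ := exists_pair_ne X
  have hD : (0 : ℝ) < dist a b := dist_pos.2 hab
  set D := dist a b with hDdef
  have huec : UniformEquicontinuous fun n : ℤ => zIter T n :=
    CompactSpace.uniformEquicontinuous_of_equicontinuous heq
  rw [Metric.uniformEquicontinuous_iff] at huec
  obtain ⟨ε₀, hε₀, hE⟩ := huec (D / 3) (by positivity)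
  refine ⟨ε₀, hε₀, ?_⟩
  intro d hd
  obtain ⟨δ₂, hδ₂, hE2⟩ := huec d hd
  set γ : Path a b := PathConnectedSpace.somePath a b with hγdef
  have hγuc : UniformContinuous ⇑γ :=
    CompactSpace.uniformContinuous_of_continuous γ.continuous
  rw [Metric.uniformContinuous_iff] at hγuc
  obtain ⟨δ₃, hδ₃, hγc⟩ := hγuc δ₂ hδ₂
  obtain ⟨N, hN⟩ := exists_nat_gt (1 / δ₃)
  have hNpos : (0 : ℝ) < N := lt_trans (by positivity) hN
  have hstep : (1 : ℝ) / N < δ₃ := by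
    rw [div_lt_iff₀ hNpos]
    rw [div_lt_iff₀ hδ₃] at hN
    nlinarith
  set x : ℤ → X := fun k => zIter T k (γ.extend ((k : ℝ) / N)) with hxdef
  refine ⟨x, ?_, ?_⟩
  · intro k
    have hstep2 : dist (γ.extend (((k + 1 : ℤ) : ℝ) / N)) (γ.extend ((k : ℝ) / N)) < δ₂ := by
      have hlip : LipschitzWith 1 (Set.projIcc (0:ℝ) 1 zero_le_one) :=
        LipschitzWith.projIcc zero_le_one
      apply hγc
      calc dist (Set.projIcc (0:ℝ) 1 zero_le_one (((k + 1 : ℤ) : ℝ) / N))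
            (Set.projIcc (0:ℝ) 1 zero_le_one ((k : ℝ) / N))
          ≤ 1 * dist (((k + 1 : ℤ) : ℝ) / N) ((k : ℝ) / N) := hlip.dist_le_mul _ _
        _ = 1 / N := by
            rw [one_mul, Real.dist_eq]
            push_cast
            rw [div_sub_div_same]
            simp [abs_of_nonneg (by positivity : (0:ℝ) ≤ 1 / (N:ℝ))]
        _ < δ₃ := hstep
    have := hE2 _ _ hstep2 (k + 1)
    calc dist (x (k + 1)) (T (x k))
        = dist (zIter T (k + 1) (γ.extend (((k + 1 : ℤ) : ℝ) / N)))
            (zIter T (k + 1) (γ.extend ((k : ℝ) / N))) := by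
          rw [show T (x k) = zIter T (k + 1) (γ.extend ((k : ℝ) / N)) from
            (zIter_succ_aux T k _).symm]
      _ ≤ d := le_of_lt this
  · intro y k hmono hT' hB h
    obtain ⟨n₁, hn₁⟩ : ∃ n, k n ≤ 0 := (hB.eventually (eventually_le_atBot 0)).exists
    obtain ⟨n₂, hn₂⟩ : ∃ n, (N : ℤ) ≤ k n := (hT'.eventually (eventually_ge_atTop (N : ℤ))).exists
    have hxa : x (k n₁) = zIter T (k n₁) a := by
      rw [hxdef]
      simp only []
      congr 1
      apply γ.extend_of_le_zero
      apply div_nonpos_of_nonpos_of_nonneg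
      · exact_mod_cast hn₁
      · positivity
    have hxb : x (k n₂) = zIter T (k n₂) b := by
      rw [hxdef]
      simp only []
      congr 1
      apply γ.extend_of_one_le
      rw [le_div_iff₀ hNpos]
      rw [one_mul]
      exact_mod_cast hn₂
    have ha : dist a y < D / 3 := by
      have := hE _ _ (h n₁) (-(k n₁))
      rwa [hxa, zIter_neg_cancel_aux, zIter_neg_cancel_aux] at this
    have hb : dist b y < D / 3 := by
      have := hE _ _ (h n₂) (-(k n₂))
      rwa [hxb, zIter_neg_cancel_aux, zIter_neg_cancel_aux] at this
    have := dist_triangle a y b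
    rw [dist_comm y b] at this
    have hDle : D ≤ dist a y + dist b y := by rw [hDdef]; linarith
    linarith
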